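/- Let N ∈ ℕ and f, f⁻¹ be maps with ‖Df|_{E^c}‖ ≤ 2N, ‖D²f‖ ≤ N, and m(Df|_{E^c}) ≥ (2N)⁻¹, and suppose X is a unit vector field over a curve γ that is (C₀, 1/2)-Hölder, meaning ‖X_m − X_{m'}‖ ≤ C₀·d(m,m')^{1/2} for all m, m' ∈ γ. If C₀ > 1/10 and N is large enough that 4(1+λ^N)N²λ^N·72 < 1/2 (where 0 < λ < 1 is a fixed constant), then the pushed-forward normalized vector field X₁ = f_*X/‖f_*X‖ is (C₁, 1/2)-Hölder with C₁ < C₀/2; consequently, there exists n₀ (depending only on C₀) such that for all n ≥ n₀ the n-th normalized push-forward X_n is (C_n, 1/2)-Hölder with C_n < 30N²λ^N. -/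

import Mathlib

lemma normalize_sub_le_aux {E : Type*} [NormedAddCommGroup E] [NormedSpace ℝ E]
    (u u' : E) (c : ℝ) (hc : 0 < c) (hu : c ≤ ‖u‖) (hu' : c ≤ ‖u'‖) :
    ‖‖u‖⁻¹ • u - ‖u'‖⁻¹ • u'‖ ≤ 2 / c * ‖u - u'‖ := by
  have ha : (0:ℝ) < ‖u‖ := lt_of_lt_of_le hc hu
  have hb : (0:ℝ) < ‖u'‖ := lt_of_lt_of_le hc hu'
  have heq : ‖u‖⁻¹ • u - ‖u'‖⁻¹ • u' = ‖u‖⁻¹ • (u - u') + (‖u‖⁻¹ - ‖u'‖⁻¹) • u' := by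
    rw [smul_sub, sub_smul]; abel
  rw [heq]
  have h1 : ‖‖u‖⁻¹ • (u - u')‖ ≤ 1 / c * ‖u - u'‖ := by
    rw [norm_smul, Real.norm_eq_abs, abs_of_pos (inv_pos.mpr ha)]
    gcongr
    rw [one_div]
    exact inv_anti₀ hc hu
  have h2 : ‖(‖u‖⁻¹ - ‖u'‖⁻¹) • u'‖ ≤ 1 / c * ‖u - u'‖ := by
    rw [norm_smul, Real.norm_eq_abs]
    have e1 : ‖u‖⁻¹ - ‖u'‖⁻¹ = (‖u'‖ - ‖u‖) / (‖u‖ * ‖u'‖) := by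
      field_simp
    rw [e1, abs_div, abs_of_pos (mul_pos ha hb)]
    have e2 : |‖u'‖ - ‖u‖| / (‖u‖ * ‖u'‖) * ‖u'‖ = |‖u'‖ - ‖u‖| / ‖u‖ := by
      field_simp
    rw [e2]
    have h3 : |‖u'‖ - ‖u‖| ≤ ‖u - u'‖ := by
      calc |‖u'‖ - ‖u‖| ≤ ‖u' - u‖ := abs_norm_sub_norm_le u' u
        _ = ‖u - u'‖ := norm_sub_rev u' u
    calc |‖u'‖ - ‖u‖| / ‖u‖ ≤ ‖u - u'‖ / c := by
          gcongr
      _ = 1 / c * ‖u - u'‖ := by ring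
  calc ‖‖u‖⁻¹ • (u - u') + (‖u‖⁻¹ - ‖u'‖⁻¹) • u'‖
      ≤ ‖‖u‖⁻¹ • (u - u')‖ + ‖(‖u‖⁻¹ - ‖u'‖⁻¹) • u'‖ := norm_add_le _ _
    _ ≤ 1 / c * ‖u - u'‖ + 1 / c * ‖u - u'‖ := add_le_add h1 h2
    _ = 2 / c * ‖u - u'‖ := by ring

noncomputable def CseqAux (c k : ℝ) : ℕ → ℝ
  | 0 => c
  | n + 1 => k * (3 + 2 * CseqAux c k n)

set_option maxHeartbeats 2000000 in
theorem stmt16 {E : Type*} [NormedAddCommGroup E] [NormedSpace ℝ E]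
    (γ : ℕ → Type*) [∀ n, MetricSpace (γ n)]
    (N : ℕ) (hN : 1 ≤ N) (lam : ℝ) (hlam0 : 0 < lam) (hlam1 : lam < 1)
    (h : ∀ n : ℕ, γ (n + 1) → γ n) (D : ∀ n : ℕ, γ n → E →L[ℝ] E)
    (hDnorm : ∀ (n : ℕ) (x : γ n), ‖D n x‖ ≤ 2 * (N : ℝ))
    (hDlow : ∀ (n : ℕ) (x : γ n) (v : E), (2 * (N : ℝ))⁻¹ * ‖v‖ ≤ ‖D n x v‖)
    (hDlip : ∀ (n : ℕ) (x y : γ n), ‖D n x - D n y‖ ≤ (N : ℝ) * dist x y)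
    (hdiam : ∀ (n : ℕ) (x y : γ n), dist x y ≤ 7)
    (hcontr : ∀ (n : ℕ) (x y : γ (n + 1)),
      dist (h n x) (h n y) ≤ lam ^ (2 * N) * dist x y)
    (X : ∀ n : ℕ, γ n → E) (hunit : ∀ (n : ℕ) (x : γ n), ‖X n x‖ = 1)
    (hrec : ∀ (n : ℕ) (x : γ (n + 1)),
      X (n + 1) x = ‖D n (h n x) (X n (h n x))‖⁻¹ • D n (h n x) (X n (h n x)))
    (C₀ : ℝ) (hC₀ : 1 / 10 < C₀)
    (hHolder0 : ∀ x y : γ 0, ‖X 0 x - X 0 y‖ ≤ C₀ * dist x y ^ ((1 : ℝ) / 2))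
    (hsmall : 4 * (1 + lam ^ N) * (N : ℝ) ^ 2 * lam ^ N * 72 < 1 / 2) :
    (∃ C₁ : ℝ, C₁ < C₀ / 2 ∧
      ∀ x y : γ 1, ‖X 1 x - X 1 y‖ ≤ C₁ * dist x y ^ ((1 : ℝ) / 2)) ∧
    (∃ n₀ : ℕ, ∀ n ≥ n₀, ∃ Cn : ℝ, Cn < 30 * (N : ℝ) ^ 2 * lam ^ N ∧
      ∀ x y : γ n, ‖X n x - X n y‖ ≤ Cn * dist x y ^ ((1 : ℝ) / 2)) := by
  have hNpos : (0:ℝ) < N := by exact_mod_cast hN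
  have hlamN : (0:ℝ) < lam ^ N := pow_pos hlam0 N
  set K : ℝ := 4 * (N : ℝ) ^ 2 * lam ^ N with hKdef
  have hKpos : 0 < K := by positivity
  have hK144 : K < 1 / 144 := by
    nlinarith [mul_nonneg (mul_nonneg (by positivity : (0:ℝ) ≤ 4 * (N:ℝ)^2) hlamN.le) hlamN.le]
  -- the recursive sequence of Hölder constants
  set C : ℕ → ℝ := CseqAux C₀ K with hCdef
  have hC0 : C 0 = C₀ := rfl
  have hCs : ∀ n, C (n + 1) = K * (3 + 2 * C n) := fun n => rfl
  have hCpos : ∀ n, 0 < C n := by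
    intro n
    induction n with
    | zero => rw [hC0]; linarith
    | succ n ih => rw [hCs]; nlinarith
  -- the inductive step
  have step : ∀ (n : ℕ) (Cn : ℝ), 0 ≤ Cn →
      (∀ x y : γ n, ‖X n x - X n y‖ ≤ Cn * dist x y ^ ((1 : ℝ) / 2)) →
      ∀ x y : γ (n + 1),
        ‖X (n + 1) x - X (n + 1) y‖ ≤ (K * (3 + 2 * Cn)) * dist x y ^ ((1 : ℝ) / 2) := by
    intro n Cn hCn hH x y
    set m := h n x with hm
    set m' := h n y with hm'
    set v := X n m with hv
    set w := X n m' with hw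
    set u := D n m v with hu
    set u' := D n m' w with hu'
    have hvn : ‖v‖ = 1 := hunit n m
    have hwn : ‖w‖ = 1 := hunit n m'
    have hc : (0:ℝ) < (2 * (N : ℝ))⁻¹ := by positivity
    have hcu : (2 * (N : ℝ))⁻¹ ≤ ‖u‖ := by
      have := hDlow n m v; rw [hvn, mul_one] at this; exact this
    have hcu' : (2 * (N : ℝ))⁻¹ ≤ ‖u'‖ := by
      have := hDlow n m' w; rw [hwn, mul_one] at this; exact this
    have key := normalize_sub_le_aux u u' _ hc hcu hcu'
    have h2c : 2 / (2 * (N : ℝ))⁻¹ = 4 * (N : ℝ) := by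
      rw [div_eq_mul_inv, inv_inv]; ring
    rw [h2c] at key
    -- distances and square roots
    have hd0 : (0:ℝ) ≤ dist m m' := dist_nonneg
    set s := Real.sqrt (dist m m') with hs
    have hs0 : (0:ℝ) ≤ s := Real.sqrt_nonneg _
    have hssq : s * s = dist m m' := Real.mul_self_sqrt hd0
    have hs3 : s ≤ 3 := by
      have : s ≤ Real.sqrt 9 := Real.sqrt_le_sqrt (by linarith [hdiam n m m'])
      rwa [show (9:ℝ) = 3 ^ 2 by norm_num, Real.sqrt_sq (by norm_num : (0:ℝ) ≤ 3)] at this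
    have hdles : dist m m' ≤ 3 * s := by nlinarith
    -- bound on ‖u - u'‖
    have hvwd : ‖v - w‖ ≤ Cn * s := by
      have := hH m m'
      rwa [← Real.sqrt_eq_rpow] at this
    have huu' : ‖u - u'‖ ≤ 2 * (N:ℝ) * (Cn * s) + (N:ℝ) * (3 * s) := by
      have e : u - u' = D n m (v - w) + (D n m - D n m') w := by
        rw [hu, hu', map_sub, ContinuousLinearMap.sub_apply]
        abel
      rw [e]
      calc ‖D n m (v - w) + (D n m - D n m') w‖
          ≤ ‖D n m (v - w)‖ + ‖(D n m - D n m') w‖ := norm_add_le _ _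
        _ ≤ ‖D n m‖ * ‖v - w‖ + ‖D n m - D n m'‖ * ‖w‖ :=
            add_le_add (ContinuousLinearMap.le_opNorm _ _) (ContinuousLinearMap.le_opNorm _ _)
        _ ≤ 2 * (N:ℝ) * (Cn * s) + ((N:ℝ) * dist m m') * 1 := by
            apply add_le_add
            · exact mul_le_mul (hDnorm n m) hvwd (norm_nonneg _) (by positivity)
            · rw [hwn]; exact mul_le_mul_of_nonneg_right (hDlip n m m') (by norm_num)
        _ ≤ 2 * (N:ℝ) * (Cn * s) + (N:ℝ) * (3 * s) := by nlinarith
    -- bound s by lam^N * dist x y ^ (1/2)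
    have hsle : s ≤ lam ^ N * dist x y ^ ((1:ℝ)/2) := by
      have h1 : s ≤ Real.sqrt (lam ^ (2 * N) * dist x y) :=
        Real.sqrt_le_sqrt (hcontr n x y)
      rwa [Real.sqrt_mul (by positivity) _, show lam ^ (2 * N) = (lam ^ N) ^ 2 by
          rw [← pow_mul]; ring_nf,
        Real.sqrt_sq hlamN.le, Real.sqrt_eq_rpow] at h1
    -- combine
    rw [hrec n x, hrec n y]
    calc ‖‖D n (h n x) (X n (h n x))‖⁻¹ • D n (h n x) (X n (h n x)) -
          ‖D n (h n y) (X n (h n y))‖⁻¹ • D n (h n y) (X n (h n y))‖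
        = ‖‖u‖⁻¹ • u - ‖u'‖⁻¹ • u'‖ := rfl
      _ ≤ 4 * (N:ℝ) * ‖u - u'‖ := key
      _ ≤ 4 * (N:ℝ) * (2 * (N:ℝ) * (Cn * s) + (N:ℝ) * (3 * s)) := by
          apply mul_le_mul_of_nonneg_left huu' (by positivity)
      _ = (4 * (N:ℝ)^2 * (2 * Cn + 3)) * s := by ring
      _ ≤ (4 * (N:ℝ)^2 * (2 * Cn + 3)) * (lam ^ N * dist x y ^ ((1:ℝ)/2)) := by
          apply mul_le_mul_of_nonneg_left hsle (by positivity)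
      _ = (K * (3 + 2 * Cn)) * dist x y ^ ((1:ℝ)/2) := by rw [hKdef]; ring
  -- Hölder for all n
  have hH : ∀ n, ∀ x y : γ n, ‖X n x - X n y‖ ≤ C n * dist x y ^ ((1 : ℝ) / 2) := by
    intro n
    induction n with
    | zero => exact hHolder0
    | succ n ih => rw [hCs]; exact step n (C n) (hCpos n).le ih
  constructor
  · refine ⟨C 1, ?_, hH 1⟩
    rw [show C 1 = K * (3 + 2 * C 0) from hCs 0, hC0]
    nlinarith
  · -- geometric bound on C n
    have hCbound : ∀ n, C n ≤ C₀ * (1/72 : ℝ) ^ n + 4 * K := by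
      intro n
      induction n with
      | zero => rw [hC0]; simp; linarith
      | succ n ih =>
          rw [hCs]
          have hp : (0:ℝ) ≤ C₀ * (1/72 : ℝ) ^ n := by positivity
          have : (1/72 : ℝ) ^ (n + 1) = (1/72) * (1/72 : ℝ) ^ n := by ring
          rw [this]
          nlinarith [hCpos n]
    obtain ⟨n₀, hn₀⟩ := exists_pow_lt_of_lt_one
      (show (0:ℝ) < 3 * K / C₀ by positivity) (show (1/72 : ℝ) < 1 by norm_num)
    refine ⟨n₀, fun n hn => ⟨C n, ?_, hH n⟩⟩
    have h1 : (1/72 : ℝ) ^ n ≤ (1/72 : ℝ) ^ n₀ :=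
      pow_le_pow_of_le_one (by norm_num) (by norm_num) hn
    have h2 : C₀ * (1/72 : ℝ) ^ n₀ < 3 * K := by
      have := (lt_div_iff₀ (show (0:ℝ) < C₀ by linarith)).mp hn₀
      nlinarith
    have h3 : C n < 7 * K := by
      have := hCbound n
      nlinarith [mul_le_mul_of_nonneg_left h1 (show (0:ℝ) ≤ C₀ by linarith)]
    have : 30 * (N:ℝ)^2 * lam ^ N = 7.5 * K := by rw [hKdef]; ring
    rw [this]
    nlinarith
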